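/- arXiv:2406.14000 — 4 statements merged into one kernel-verified Lean document; each statement's English description precedes it below -/
import Mathlib

section
/- Let D > 0, γ > D^(3/2) + D + 1/2, and ε satisfy (2/3)·D^(3/2)/(γ - 1/2 - D) < ε < 2/3. Then for all x₁, x₂, d ∈ ℝ with x₁ ≠ 0 and |d| ≤ D, the quantity W := -(γ - sign(x₁)·d)·ε·√|x₁|·|x₁| - |x₂|³ + ε·√|x₁|·x₂²·(1/2 - sign(x₁)·sign(x₂)) + |x₁|·x₂·d satisfies W ≤ -[ε·(γ - 1/2 - D) - (2/3)·D^(3/2)]·√|x₁|·|x₁| - (2/3 - ε)·|x₂|³, and in particular W < 0 whenever (x₁, x₂) ≠ (0, 0). -/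
set_option maxHeartbeats 1000000


theorem lyapunov_derivative_estimate (D γ ε : ℝ) (hD : 0 < D)
    (hγ : D ^ ((3 : ℝ) / 2) + D + 1 / 2 < γ)
    (hε₁ : (2 / 3) * D ^ ((3 : ℝ) / 2) / (γ - 1 / 2 - D) < ε) (hε₂ : ε < 2 / 3) :
    ∀ x₁ x₂ d : ℝ, x₁ ≠ 0 → |d| ≤ D →
      (-(γ - Real.sign x₁ * d) * ε * Real.sqrt |x₁| * |x₁| - |x₂| ^ 3
          + ε * Real.sqrt |x₁| * x₂ ^ 2 * (1 / 2 - Real.sign x₁ * Real.sign x₂)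
          + |x₁| * x₂ * d
        ≤ -(ε * (γ - 1 / 2 - D) - (2 / 3) * D ^ ((3 : ℝ) / 2)) * Real.sqrt |x₁| * |x₁|
          - (2 / 3 - ε) * |x₂| ^ 3) ∧
      ((x₁, x₂) ≠ (0, 0) →
        -(γ - Real.sign x₁ * d) * ε * Real.sqrt |x₁| * |x₁| - |x₂| ^ 3
          + ε * Real.sqrt |x₁| * x₂ ^ 2 * (1 / 2 - Real.sign x₁ * Real.sign x₂)
          + |x₁| * x₂ * d < 0) := by
  intro x₁ x₂ d hx₁ hd
  have hp : 0 < D ^ ((3 : ℝ) / 2) := Real.rpow_pos_of_pos hD _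
  have hγD : 0 < γ - 1 / 2 - D := by linarith
  have hεpos : 0 < ε := lt_trans (div_pos (by linarith) hγD) hε₁
  have hc₁ : (2 / 3) * D ^ ((3 : ℝ) / 2) < ε * (γ - 1 / 2 - D) :=
    (div_lt_iff₀ hγD).mp hε₁
  have ha : 0 < |x₁| := abs_pos.mpr hx₁
  set s := Real.sqrt |x₁| with hs_def
  have hs0 : 0 < s := Real.sqrt_pos.mpr ha
  have hs2 : s ^ 2 = |x₁| := Real.sq_sqrt ha.le
  set t := Real.sqrt D with ht_def
  have ht0 : 0 ≤ t := Real.sqrt_nonneg D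
  have ht2 : t ^ 2 = D := Real.sq_sqrt hD.le
  have htD : D ^ ((3 : ℝ) / 2) = t ^ 3 := by
    rw [show ((3 : ℝ) / 2) = (1 / 2 : ℝ) * 3 by ring, Real.rpow_mul hD.le,
      ← Real.sqrt_eq_rpow, show ((3 : ℝ) : ℝ) = ((3 : ℕ) : ℝ) by norm_num,
      Real.rpow_natCast]
  have hsb : ∀ y : ℝ, -1 ≤ Real.sign y ∧ Real.sign y ≤ 1 := by
    intro y
    rcases lt_trichotomy y 0 with h | h | h
    · rw [Real.sign_of_neg h]; norm_num
    · rw [h, Real.sign_zero]; norm_num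
    · rw [Real.sign_of_pos h]; norm_num
  obtain ⟨ha1, ha2⟩ := hsb x₁
  obtain ⟨hb1, hb2⟩ := hsb x₂
  obtain ⟨hd1, hd2⟩ := abs_le.mp hd
  have hσd : Real.sign x₁ * d ≤ D := by
    nlinarith [mul_nonneg (by linarith : (0:ℝ) ≤ 1 - Real.sign x₁) (by linarith : (0:ℝ) ≤ D - d),
      mul_nonneg (by linarith : (0:ℝ) ≤ 1 + Real.sign x₁) (by linarith : (0:ℝ) ≤ D + d)]
  have hσσ : -1 ≤ Real.sign x₁ * Real.sign x₂ := by
    nlinarith [mul_nonneg (by linarith : (0:ℝ) ≤ 1 - Real.sign x₁) (by linarith : (0:ℝ) ≤ 1 - Real.sign x₂),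
      mul_nonneg (by linarith : (0:ℝ) ≤ 1 + Real.sign x₁) (by linarith : (0:ℝ) ≤ 1 + Real.sign x₂)]
  -- h1 : sign term in the γ coefficient
  have h1 : 0 ≤ (D - Real.sign x₁ * d) * (ε * (s * s ^ 2)) :=
    mul_nonneg (by linarith) (by positivity)
  -- h2 : bound on the cross sign factor
  have h2 : 0 ≤ (1 + Real.sign x₁ * Real.sign x₂) * (ε * (s * |x₂| ^ 2)) :=
    mul_nonneg (by linarith) (by positivity)
  -- h3 : bound on the disturbance term
  have hxd : x₂ * d ≤ |x₂| * D := by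
    calc x₂ * d ≤ |x₂ * d| := le_abs_self _
    _ = |x₂| * |d| := abs_mul _ _
    _ ≤ |x₂| * D := mul_le_mul_of_nonneg_left hd (abs_nonneg x₂)
  have h3 : s ^ 2 * (x₂ * d) ≤ s ^ 2 * (|x₂| * D) :=
    mul_le_mul_of_nonneg_left hxd (sq_nonneg s)
  -- Young-type inequalities
  have hA : s * |x₂| ^ 2 ≤ (1/3) * s ^ 3 + (2/3) * |x₂| ^ 3 := by
    nlinarith [mul_nonneg (sq_nonneg (s - |x₂|)) (by positivity : (0:ℝ) ≤ s + 2 * |x₂|)]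
  have h4 : (3/2) * ε * (s * |x₂| ^ 2) ≤ (3/2) * ε * ((1/3) * s ^ 3 + (2/3) * |x₂| ^ 3) :=
    mul_le_mul_of_nonneg_left hA (by positivity)
  have h5 : D * (s ^ 2 * |x₂|) ≤ (2/3) * (t ^ 3 * s ^ 3) + (1/3) * |x₂| ^ 3 := by
    rw [← ht2]
    nlinarith [mul_nonneg (sq_nonneg (t * s - |x₂|)) (by positivity : (0:ℝ) ≤ 2 * (t * s) + |x₂|)]
  have main : -(γ - Real.sign x₁ * d) * ε * s * |x₁| - |x₂| ^ 3
      + ε * s * x₂ ^ 2 * (1 / 2 - Real.sign x₁ * Real.sign x₂)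
      + |x₁| * x₂ * d
      ≤ -(ε * (γ - 1 / 2 - D) - (2 / 3) * D ^ ((3 : ℝ) / 2)) * s * |x₁|
        - (2 / 3 - ε) * |x₂| ^ 3 := by
    rw [htD, ← hs2, ← sq_abs x₂]
    linarith [h1, h2, h3, h4, h5]
  refine ⟨main, fun _ => ?_⟩
  have hRHS : -(ε * (γ - 1 / 2 - D) - (2 / 3) * D ^ ((3 : ℝ) / 2)) * s * |x₁|
      - (2 / 3 - ε) * |x₂| ^ 3 < 0 := by
    have hcoef : 0 < ε * (γ - 1 / 2 - D) - (2 / 3) * D ^ ((3 : ℝ) / 2) := by linarith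
    have h6 : 0 ≤ |x₂| ^ 3 := by positivity
    nlinarith [mul_pos (mul_pos hcoef hs0) ha]
  exact lt_of_le_of_lt main hRHS
end

section
/- Let κ > 0 and let V : [t₀, ∞) → ℝ be a nonnegative, continuously differentiable function satisfying V'(t) ≤ -κ·√(V(t)) for all t ≥ t₀. Then V(t) = 0 for all t ≥ t₀ + 2·√(V(t₀))/κ. -/
theorem finite_time_convergence (κ t₀ : ℝ) (hκ : 0 < κ) (V V' : ℝ → ℝ)
    (hVnonneg : ∀ t, t₀ ≤ t → 0 ≤ V t)
    (hderiv : ∀ t ∈ Set.Ici t₀, HasDerivAt V (V' t) t)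
    (hcont : ContinuousOn V' (Set.Ici t₀))
    (hineq : ∀ t ∈ Set.Ici t₀, V' t ≤ -κ * Real.sqrt (V t)) :
    ∀ t, t₀ + 2 * Real.sqrt (V t₀) / κ ≤ t → V t = 0 := by
  intro t ht
  have hs0 : 0 ≤ Real.sqrt (V t₀) := Real.sqrt_nonneg _
  have hd : 0 ≤ 2 * Real.sqrt (V t₀) / κ := by positivity
  have ht₀t : t₀ ≤ t := le_trans (by linarith) ht
  by_contra hne
  have hpos : 0 < V t := lt_of_le_of_ne (hVnonneg t ht₀t) (Ne.symm hne)
  have hVc : ContinuousOn V (Set.Icc t₀ t) := fun x hx =>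
    ((hderiv x hx.1).continuousAt).continuousWithinAt
  have hint : interior (Set.Icc t₀ t) = Set.Ioo t₀ t := interior_Icc
  have hVanti : AntitoneOn V (Set.Icc t₀ t) := by
    apply antitoneOn_of_deriv_nonpos (convex_Icc _ _) hVc
    · intro x hx
      rw [hint] at hx
      exact (hderiv x (le_of_lt hx.1)).differentiableAt.differentiableWithinAt
    · intro x hx
      rw [hint] at hx
      rw [(hderiv x (le_of_lt hx.1)).deriv]
      have := hineq x (le_of_lt hx.1)
      nlinarith [Real.sqrt_nonneg (V x), hκ.le]
  have hVposOn : ∀ s ∈ Set.Icc t₀ t, 0 < V s := fun s hs =>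
    lt_of_lt_of_le hpos (hVanti hs ⟨ht₀t, le_refl t⟩ hs.2)
  set g : ℝ → ℝ := fun s => Real.sqrt (V s) + κ / 2 * s with hg
  have hganti : AntitoneOn g (Set.Icc t₀ t) := by
    apply antitoneOn_of_deriv_nonpos (convex_Icc _ _)
    · exact (Real.continuous_sqrt.comp_continuousOn hVc).add
        ((continuous_const.mul continuous_id).continuousOn)
    · intro x hx
      rw [hint] at hx
      have hxI : x ∈ Set.Ici t₀ := le_of_lt hx.1
      have hVx : 0 < V x := hVposOn x ⟨le_of_lt hx.1, le_of_lt hx.2⟩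
      exact (((hderiv x hxI).sqrt hVx.ne').add
        ((hasDerivAt_id x).const_mul (κ / 2))).differentiableAt.differentiableWithinAt
    · intro x hx
      rw [hint] at hx
      have hxI : x ∈ Set.Ici t₀ := le_of_lt hx.1
      have hVx : 0 < V x := hVposOn x ⟨le_of_lt hx.1, le_of_lt hx.2⟩
      have hsx : 0 < Real.sqrt (V x) := Real.sqrt_pos.mpr hVx
      have hD : HasDerivAt g (V' x / (2 * Real.sqrt (V x)) + κ / 2 * 1) x :=
        ((hderiv x hxI).sqrt hVx.ne').add ((hasDerivAt_id x).const_mul (κ / 2))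
      rw [hD.deriv]
      have h1 := hineq x hxI
      have h2 : V' x / (2 * Real.sqrt (V x)) ≤ -κ / 2 := by
        rw [div_le_iff₀ (by positivity)]
        nlinarith
      linarith
  have hle := hganti ⟨le_refl t₀, ht₀t⟩ ⟨ht₀t, le_refl t⟩ ht₀t
  have hst : 0 < Real.sqrt (V t) := Real.sqrt_pos.mpr hpos
  have hkk : κ / 2 * (2 * Real.sqrt (V t₀) / κ) = Real.sqrt (V t₀) := by
    field_simp
  simp only [hg] at hle
  nlinarith
end

section
/- Let γ > 0, 0 < ε < 2/3, θ > 0, and set V(x₁, x₂) = γ·|x₁| + ε·√|x₁|·sign(x₁)·x₂ + x₂²/2. Then there exists κ > 0 such that for all x₁, x₂ ∈ ℝ, (2/3 - ε)·θ·|x₂| + c·√|x₁| ≥ κ·√(V(x₁, x₂)) for any fixed c > 0 (with κ depending on γ, ε, θ, c). -/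
theorem dissipation_dominates_sqrtV (γ ε θ c : ℝ) (hγ : 0 < γ) (hε₀ : 0 < ε)
    (hε₁ : ε < 2 / 3) (hε₂ : ε ^ 2 < 2 * γ) (hθ : 0 < θ) (hc : 0 < c) :
    ∃ κ : ℝ, 0 < κ ∧ ∀ x₁ x₂ : ℝ,
      κ * Real.sqrt (γ * |x₁| + ε * Real.sqrt |x₁| * Real.sign x₁ * x₂ + x₂ ^ 2 / 2)
        ≤ (2 / 3 - ε) * θ * |x₂| + c * Real.sqrt |x₁| := by
  set A : ℝ := γ + ε / 2 + 1 with hA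
  have hApos : 0 < A := by positivity
  set m : ℝ := min ((2 / 3 - ε) * θ) c with hm
  have hmpos : 0 < m := lt_min (by nlinarith) hc
  refine ⟨m / Real.sqrt A, div_pos hmpos (Real.sqrt_pos.2 hApos), fun x₁ x₂ => ?_⟩
  set a : ℝ := Real.sqrt |x₁| with haa
  have ha : 0 ≤ a := Real.sqrt_nonneg _
  have ha2 : a ^ 2 = |x₁| := Real.sq_sqrt (abs_nonneg _)
  have hsign : |Real.sign x₁| ≤ 1 := by
    rcases Real.sign_apply_eq x₁ with h | h | h <;> rw [h] <;> norm_num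
  have hsb : ε * a * Real.sign x₁ * x₂ ≤ ε * a * |x₂| := by
    have h1 : ε * a * Real.sign x₁ * x₂ ≤ |ε * a * Real.sign x₁ * x₂| := le_abs_self _
    have h2 : |ε * a * Real.sign x₁ * x₂| = ε * a * |Real.sign x₁| * |x₂| := by
      rw [abs_mul, abs_mul, abs_mul, abs_of_nonneg hε₀.le, abs_of_nonneg ha]
    nlinarith [mul_nonneg (sub_nonneg.2 hsign) (mul_nonneg (mul_nonneg hε₀.le ha) (abs_nonneg x₂))]
  have hVle : γ * |x₁| + ε * a * Real.sign x₁ * x₂ + x₂ ^ 2 / 2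
      ≤ A * (a + |x₂|) ^ 2 := by
    rw [hA, ← ha2]
    nlinarith [hsb, sq_abs x₂, mul_nonneg hγ.le (mul_nonneg ha (abs_nonneg x₂)),
      mul_nonneg hγ.le (sq_nonneg x₂), mul_nonneg hε₀.le (sq_nonneg (a - |x₂|)),
      sq_nonneg (a + |x₂|), mul_nonneg ha (abs_nonneg x₂), sq_nonneg x₂]
  have hsqrt : Real.sqrt (γ * |x₁| + ε * a * Real.sign x₁ * x₂ + x₂ ^ 2 / 2)
      ≤ Real.sqrt A * (a + |x₂|) := by
    have := Real.sqrt_le_sqrt hVle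
    rwa [Real.sqrt_mul hApos.le, Real.sqrt_sq (by positivity)] at this
  have hsA : 0 < Real.sqrt A := Real.sqrt_pos.2 hApos
  calc m / Real.sqrt A * Real.sqrt (γ * |x₁| + ε * a * Real.sign x₁ * x₂ + x₂ ^ 2 / 2)
      ≤ m / Real.sqrt A * (Real.sqrt A * (a + |x₂|)) := by
        apply mul_le_mul_of_nonneg_left hsqrt (by positivity)
    _ = m * (a + |x₂|) := by field_simp
    _ ≤ (2 / 3 - ε) * θ * |x₂| + c * a := by
        have h1 : m ≤ (2 / 3 - ε) * θ := min_le_left _ _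
        have h2 : m ≤ c := min_le_right _ _
        nlinarith [abs_nonneg x₂]
end

section
/- Let z : [0, ∞) → ℝ be nonnegative and absolutely continuous, let m : [0, ∞) → ℝ≥0 be locally integrable, and suppose z'(t) ≤ m(t)·(2(D+γ) - z(t)) whenever z(t) > 0 (a.e.), with D ≥ 0, γ > 0. Then z(t) ≤ max{z(0), 2(D+γ)} for all t ≥ 0. -/
theorem z_boundedness (D γ : ℝ) (hD : 0 ≤ D) (hγ : 0 < γ) (z z' m : ℝ → ℝ)
    (hznn : ∀ t, 0 ≤ t → 0 ≤ z t)
    (hz : ∀ t ∈ Set.Ici (0 : ℝ), HasDerivAt z (z' t) t)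
    (hm : ∀ t, 0 ≤ t → 0 ≤ m t)
    (hmloc : MeasureTheory.LocallyIntegrableOn m (Set.Ici 0))
    (hineq : ∀ t, 0 ≤ t → 0 < z t → z' t ≤ m t * (2 * (D + γ) - z t)) :
    ∀ t, 0 ≤ t → z t ≤ max (z 0) (2 * (D + γ)) := by
  intro t ht
  by_contra hcon
  push_neg at hcon
  set B : ℝ := max (z 0) (2 * (D + γ)) with hB
  have hz0B : z 0 ≤ B := le_max_left _ _
  have hMB : 2 * (D + γ) ≤ B := le_max_right _ _
  have hMpos : 0 < 2 * (D + γ) := by positivity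
  -- continuity of z on [0, t]
  have hcont : ContinuousOn z (Set.Icc 0 t) := fun u hu =>
    (hz u hu.1).continuousAt.continuousWithinAt
  -- the set where z ≤ B within [0, t]
  set S : Set ℝ := Set.Icc 0 t ∩ z ⁻¹' Set.Iic B with hS
  have hSne : S.Nonempty := ⟨0, ⟨le_refl 0, ht⟩, hz0B⟩
  have hScl : IsClosed S :=
    hcont.preimage_isClosed_of_isClosed isClosed_Icc isClosed_Iic
  have hScomp : IsCompact S :=
    (isCompact_Icc).of_isClosed_subset hScl Set.inter_subset_left
  set s : ℝ := sSup S with hs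
  have hsS : s ∈ S := hScomp.sSup_mem hSne
  obtain ⟨⟨hs0, hst⟩, hzsB⟩ := hsS
  have hsltt : s < t := lt_of_le_of_ne hst (fun h => by
    rw [h] at hzsB; exact absurd hzsB (not_le.2 hcon))
  -- on (s, t], z u > B
  have hgt : ∀ u, s < u → u ≤ t → B < z u := by
    intro u hsu hut
    by_contra h
    push_neg at h
    have : u ∈ S := ⟨⟨le_trans hs0 hsu.le, hut⟩, h⟩
    exact absurd (le_csSup hScomp.bddAbove this) (not_le.2 hsu)
  -- z is antitone on [s, t]
  have hanti : AntitoneOn z (Set.Icc s t) := by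
    apply antitoneOn_of_hasDerivWithinAt_nonpos (f' := z') (convex_Icc s t)
    · exact hcont.mono (Set.Icc_subset_Icc hs0 le_rfl)
    · intro x hx
      rw [interior_Icc] at hx
      exact (hz x (le_trans hs0 hx.1.le)).hasDerivWithinAt
    · intro x hx
      rw [interior_Icc] at hx
      have hx0 : 0 ≤ x := le_trans hs0 hx.1.le
      have hzx : B < z x := hgt x hx.1 hx.2.le
      have h1 : z' x ≤ m x * (2 * (D + γ) - z x) :=
        hineq x hx0 (lt_trans (lt_of_lt_of_le hMpos hMB) hzx)
      have h2 : m x * (2 * (D + γ) - z x) ≤ 0 :=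
        mul_nonpos_of_nonneg_of_nonpos (hm x hx0)
          (by linarith [lt_of_le_of_lt hMB hzx])
      linarith
  have h3 : z s ≤ B := hzsB
  have := hanti ⟨le_rfl, hsltt.le⟩ ⟨hsltt.le, le_rfl⟩ hsltt.le
  linarith
end
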